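/- (Attainability.) Let ρ₀, ρ₁ be density operators on H_enc given with equal prior probability 1/2, let A := ρ₁ - ρ₀ with positive/negative eigenspace projectors Π₊, Π₋ (Π₊ + Π₋ = I), let H_anc = ℂ² with basis {|0⟩,|1⟩}, and define Ĥ := Π₋⊗I + Π₊⊗(|0⟩⟨1| + |1⟩⟨0|) and H := E_max(Ĥ + I)/2 for E_max ≥ 0. Then H ≥ 0, ‖H‖_∞ ≤ E_max, and evolving ρ̃ₓ = ρₓ⊗|0⟩⟨0| by U = exp(-iHt) followed by the computational-basis measurement of the ancilla yields success probability exactly 1/2 + (1/4)(1 - cos(t·E_max))·D(ρ₀,ρ₁). -/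

import Mathlib

open Matrix Kronecker ComplexOrder

lemma exp_smul_of_sq_eq_two_smul {m : Type*} [Fintype m] [DecidableEq m]
    (N : Matrix m m ℂ) (hN : N * N = (2:ℂ) • N) (z : ℂ) :
    NormedSpace.exp (z • N) = 1 + ((Complex.exp (2*z) - 1)/2) • N := by
  letI : SeminormedRing (Matrix m m ℂ) := Matrix.linftyOpSemiNormedRing
  letI : NormedRing (Matrix m m ℂ) := Matrix.linftyOpNormedRing
  letI : NormedAlgebra ℂ (Matrix m m ℂ) := Matrix.linftyOpNormedAlgebra
  have hpow : ∀ k : ℕ, N ^ (k+1) = ((2:ℂ)^k) • N := by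
    intro k
    induction k with
    | zero => simp
    | succ k ih =>
      rw [pow_succ, ih, smul_mul_assoc, hN, smul_smul, pow_succ]
  rw [NormedSpace.exp_eq_tsum ℂ]
  show (∑' n : ℕ, ((n.factorial : ℂ))⁻¹ • (z • N) ^ n) = _
  have hsum : Summable fun n : ℕ => ((n.factorial : ℂ))⁻¹ • (z • N) ^ n :=
    NormedSpace.expSeries_summable' (𝕂 := ℂ) (z • N)
  rw [hsum.tsum_eq_zero_add]
  congr 1
  · simp
  have : ∀ n : ℕ, ((((n+1).factorial : ℂ))⁻¹ • (z • N) ^ (n+1)) =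
      ((((n+1).factorial : ℂ))⁻¹ * (2*z)^(n+1) / 2) • N := by
    intro n
    rw [smul_pow, hpow, smul_smul, smul_smul]
    congr 1
    ring
  simp_rw [this]
  have hs : Summable fun n : ℕ => (2*z)^n / (n.factorial : ℂ) :=
    NormedSpace.expSeries_div_summable (2*z)
  have hs1 : Summable fun n : ℕ => (2*z)^(n+1) / ((n+1).factorial : ℂ) :=
    hs.comp_injective Nat.succ_injective
  have hfun : (fun n : ℕ => (((n+1).factorial : ℂ))⁻¹ * (2*z)^(n+1) / 2) =
      fun n : ℕ => ((2*z)^(n+1) / ((n+1).factorial : ℂ)) / 2 := by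
    funext n; ring
  have he : Complex.exp (2*z) = ∑' n : ℕ, (2*z)^n / (n.factorial:ℂ) := by
    rw [Complex.exp_eq_exp_ℂ, NormedSpace.exp_eq_tsum_div]
  have key : (∑' n : ℕ, (2*z)^(n+1) / ((n+1).factorial : ℂ)) = Complex.exp (2*z) - 1 := by
    have h0 := hs.tsum_eq_zero_add
    rw [← he] at h0
    simp only [pow_zero, Nat.factorial_zero, Nat.cast_one, div_one] at h0
    linear_combination -h0
  rw [Summable.tsum_smul_const (hfun ▸ (hs1.div_const 2))]
  congr 1
  rw [hfun, tsum_div_const, key]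

lemma kron_conjT {l m p q : Type*} (A : Matrix l m ℂ) (B : Matrix p q ℂ) :
    (A ⊗ₖ B)ᴴ = Aᴴ ⊗ₖ Bᴴ := by
  ext ⟨ia, ib⟩ ⟨ja, jb⟩
  simp [conjTranspose_apply, kroneckerMap_apply, mul_comm]

lemma psd_real_smul {m : Type*} [Fintype m] (M : Matrix m m ℂ) (hM : M.PosSemidef)
    (r : ℝ) (hr : 0 ≤ r) : (((r:ℝ):ℂ) • M).PosSemidef := by
  exact hM.smul (by exact_mod_cast hr)

open scoped Classical in
theorem attainability {d : ℕ} (ρ₀ ρ₁ : Matrix (Fin d) (Fin d) ℂ)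
    (hρ₀ : ρ₀.PosSemidef) (hρ₁ : ρ₁.PosSemidef)
    (htr₀ : ρ₀.trace = 1) (htr₁ : ρ₁.trace = 1)
    (lam : Fin d → ℝ) (u : Fin d → Fin d → ℂ)
    (hu : ∀ i j, star (u i) ⬝ᵥ u j = if i = j then 1 else 0)
    (hA : ρ₁ - ρ₀ = ∑ j, (lam j : ℂ) • vecMulVec (u j) (star (u j)))
    (Emax : ℝ) (hEmax : 0 ≤ Emax) (t : ℝ) (ht : 0 ≤ t) :
    let Pplus : Matrix (Fin d) (Fin d) ℂ :=
      ∑ j, if 0 ≤ lam j then vecMulVec (u j) (star (u j)) else 0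
    let Pminus : Matrix (Fin d) (Fin d) ℂ := 1 - Pplus
    let Hhat : Matrix (Fin d × Fin 2) (Fin d × Fin 2) ℂ :=
      Pminus ⊗ₖ (1 : Matrix (Fin 2) (Fin 2) ℂ) +
        Pplus ⊗ₖ (Matrix.single (0 : Fin 2) 1 (1 : ℂ) +
          Matrix.single (1 : Fin 2) 0 (1 : ℂ))
    let H : Matrix (Fin d × Fin 2) (Fin d × Fin 2) ℂ :=
      ((Emax / 2 : ℝ) : ℂ) • (Hhat + 1)
    let U : Matrix (Fin d × Fin 2) (Fin d × Fin 2) ℂ :=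
      NormedSpace.exp ((-(Complex.I * (t : ℂ))) • H)
    H.PosSemidef ∧
      (((Emax : ℝ) : ℂ) • (1 : Matrix (Fin d × Fin 2) (Fin d × Fin 2) ℂ) - H).PosSemidef ∧
      (1 / 2 : ℂ) *
          ((((1 : Matrix (Fin d) (Fin d) ℂ) ⊗ₖ Matrix.single (0 : Fin 2) 0 (1 : ℂ)) *
              (U * (ρ₀ ⊗ₖ Matrix.single (0 : Fin 2) 0 (1 : ℂ)) * Uᴴ)).trace +
            (((1 : Matrix (Fin d) (Fin d) ℂ) ⊗ₖ Matrix.single (1 : Fin 2) 1 (1 : ℂ)) *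
              (U * (ρ₁ ⊗ₖ Matrix.single (0 : Fin 2) 0 (1 : ℂ)) * Uᴴ)).trace) =
        ((1 / 2 + 1 / 4 * (1 - Real.cos (t * Emax)) * (1 / 2 * ∑ j, |lam j|) : ℝ) : ℂ) := by
  intro Pplus Pminus Hhat H U
  -- abbreviations
  set E00 : Matrix (Fin 2) (Fin 2) ℂ := Matrix.single (0 : Fin 2) (0 : Fin 2) (1 : ℂ) with hE00
  set E01 : Matrix (Fin 2) (Fin 2) ℂ := Matrix.single (0 : Fin 2) (1 : Fin 2) (1 : ℂ) with hE01
  set E10 : Matrix (Fin 2) (Fin 2) ℂ := Matrix.single (1 : Fin 2) (0 : Fin 2) (1 : ℂ) with hE10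
  set E11 : Matrix (Fin 2) (Fin 2) ℂ := Matrix.single (1 : Fin 2) (1 : Fin 2) (1 : ℂ) with hE11
  set S : Matrix (Fin 2) (Fin 2) ℂ := E01 + E10 with hS
  -- Fin 2 multiplication table
  have f2 : ∀ (i j k l : Fin 2), Matrix.single i j (1:ℂ) * Matrix.single k l (1:ℂ)
      = if j = k then Matrix.single i l (1:ℂ) else 0 := by
    intro i j k l
    split
    · subst ‹j = k›; rw [Matrix.single_mul_single_same, one_mul]
    · exact Matrix.single_mul_single_of_ne (c := (1:ℂ)) _ _ _ ‹j ≠ k› _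
  have hSS : S * S = 1 := by
    rw [hS, add_mul, mul_add, mul_add, hE01, hE10, f2, f2, f2, f2]
    norm_num
    ext i j
    fin_cases i <;> fin_cases j <;> simp [Matrix.single]
  -- orthonormality consequences
  have hPP : ∀ i j, vecMulVec (u i) (star (u i)) * vecMulVec (u j) (star (u j)) =
      if i = j then vecMulVec (u i) (star (u i)) else 0 := by
    intro i j
    have key : vecMulVec (u i) (star (u i)) * vecMulVec (u j) (star (u j)) =
        (star (u i) ⬝ᵥ u j) • vecMulVec (u i) (star (u j)) := by
      ext a b
      simp only [Matrix.mul_apply, vecMulVec_apply, Matrix.smul_apply, smul_eq_mul,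
        dotProduct, Pi.star_apply, Finset.sum_mul]
      exact Finset.sum_congr rfl fun k _ => by ring
    rw [key, hu i j]
    split
    · subst ‹i = j›; rw [one_smul]
    · rw [zero_smul]
  have htrP : ∀ j, (vecMulVec (u j) (star (u j))).trace = 1 := by
    intro j
    have h := hu j j
    rw [if_pos rfl] at h
    rw [← h]
    simp [Matrix.trace, Matrix.diag, vecMulVec_apply, dotProduct, mul_comm]
  set T : Finset (Fin d) := Finset.univ.filter (fun j => 0 ≤ lam j) with hT
  have hPfilter : Pplus = ∑ j ∈ T, vecMulVec (u j) (star (u j)) := by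
    rw [hT, Finset.sum_filter]
  have hPmul : ∀ j, Pplus * vecMulVec (u j) (star (u j)) =
      if 0 ≤ lam j then vecMulVec (u j) (star (u j)) else 0 := by
    intro j
    rw [hPfilter, Finset.sum_mul]
    simp_rw [hPP]
    rw [Finset.sum_ite_eq' T j (fun i => vecMulVec (u i) (star (u i)))]
    simp [hT, Finset.mem_filter]
  have hP2 : Pplus * Pplus = Pplus := by
    nth_rewrite 2 [hPfilter]
    rw [Finset.mul_sum]
    simp_rw [hPmul]
    have heq : (∑ j ∈ T, if 0 ≤ lam j then vecMulVec (u j) (star (u j)) else 0)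
        = ∑ j ∈ T, vecMulVec (u j) (star (u j)) :=
      Finset.sum_congr rfl fun j hj => if_pos (Finset.mem_filter.mp hj).2
    rw [heq, ← hPfilter]
  -- definitional equalities
  have hPdef : Pplus = ∑ j, if 0 ≤ lam j then vecMulVec (u j) (star (u j)) else 0 := rfl
  have hPmdef : Pminus = 1 - Pplus := rfl
  have hHhatdef : Hhat = Pminus ⊗ₖ (1 : Matrix (Fin 2) (Fin 2) ℂ) + Pplus ⊗ₖ S := rfl
  have hHdef : H = ((Emax / 2 : ℝ) : ℂ) • (Hhat + 1) := rfl
  have hUdef : U = NormedSpace.exp ((-(Complex.I * (t : ℂ))) • H) := rfl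
  -- Hermiticity
  have hvH : ∀ j, (vecMulVec (u j) (star (u j)))ᴴ = vecMulVec (u j) (star (u j)) := by
    intro j; ext a b; simp [conjTranspose_apply, vecMulVec_apply, mul_comm]
  have hPH : Pplusᴴ = Pplus := by
    rw [hPdef, Matrix.conjTranspose_sum]
    exact Finset.sum_congr rfl fun j _ => by
      rw [apply_ite conjTranspose, hvH, conjTranspose_zero]
  have hSH : Sᴴ = S := by
    ext i j
    fin_cases i <;> fin_cases j <;>
      simp [hS, hE01, hE10, Matrix.conjTranspose_apply, Matrix.single]
  have hHhatH : Hhatᴴ = Hhat := by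
    rw [hHhatdef, conjTranspose_add, kron_conjT, kron_conjT, conjTranspose_one, hSH,
      hPmdef, conjTranspose_sub, conjTranspose_one, hPH]
  -- algebra of projectors
  have hPmP : Pminus * Pplus = 0 := by rw [hPmdef, sub_mul, one_mul, hP2, sub_self]
  have hPPm : Pplus * Pminus = 0 := by rw [hPmdef, mul_sub, mul_one, hP2, sub_self]
  have hPm2 : Pminus * Pminus = Pminus := by
    rw [hPmdef, sub_mul, one_mul, mul_sub, mul_one, hP2, sub_self, sub_zero]
  have hHhat2 : Hhat * Hhat = 1 := by
    rw [hHhatdef]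
    simp only [add_mul, mul_add, ← Matrix.mul_kronecker_mul, hPm2, hPmP, hPPm, hP2,
      one_mul, mul_one, hSS, Matrix.zero_kronecker, add_zero, zero_add]
    rw [← Matrix.add_kronecker, hPmdef, sub_add_cancel, Matrix.one_kronecker_one]
  have hN2 : (Hhat + 1) * (Hhat + 1) = (2:ℂ) • (Hhat + 1) := by
    rw [two_smul]
    simp only [add_mul, mul_add, hHhat2, mul_one, one_mul]
    abel
  have hNH : (Hhat + 1)ᴴ = Hhat + 1 := by rw [conjTranspose_add, hHhatH, conjTranspose_one]
  -- positive semidefiniteness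
  have hNpsd : (Hhat + 1).PosSemidef := by
    have h1 : (((1/2:ℝ)):ℂ) • ((Hhat + 1)ᴴ * (Hhat + 1)) = Hhat + 1 := by
      rw [hNH, hN2, smul_smul]
      norm_num
    rw [← h1]
    exact psd_real_smul _ (Matrix.posSemidef_conjTranspose_mul_self _) _ (by norm_num)
  have hHpsd : H.PosSemidef := psd_real_smul _ hNpsd _ (by linarith)
  refine ⟨hHpsd, ?_, ?_⟩
  · -- Emax • 1 - H is PSD
    have hM2 : (1 - Hhat) * (1 - Hhat) = (2:ℂ) • (1 - Hhat) := by
      rw [two_smul]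
      simp only [sub_mul, mul_sub, hHhat2, mul_one, one_mul]
      abel
    have hMH : (1 - Hhat)ᴴ = 1 - Hhat := by
      rw [conjTranspose_sub, hHhatH, conjTranspose_one]
    have hMpsd : ((1 : Matrix (Fin d × Fin 2) (Fin d × Fin 2) ℂ) - Hhat).PosSemidef := by
      have h1 : (((1/2:ℝ)):ℂ) • ((1 - Hhat)ᴴ * (1 - Hhat)) = 1 - Hhat := by
        rw [hMH, hM2, smul_smul]
        norm_num
      rw [← h1]
      exact psd_real_smul _ (Matrix.posSemidef_conjTranspose_mul_self _) _ (by norm_num)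
    have hEH : ((Emax : ℝ) : ℂ) • (1 : Matrix (Fin d × Fin 2) (Fin d × Fin 2) ℂ) - H
        = ((Emax/2 : ℝ) : ℂ) • (1 - Hhat) := by
      rw [hHdef]
      push_cast
      module
    rw [hEH]
    exact psd_real_smul _ hMpsd _ (by linarith)
  -- the success probability
  set φ : ℝ := t * Emax with hφ
  set w : ℂ := Complex.exp (-(((φ:ℝ):ℂ) * Complex.I)) with hwdef
  have hwstar : star w = Complex.exp (((φ:ℝ):ℂ) * Complex.I) := by
    rw [hwdef, Complex.star_def, ← Complex.exp_conj]
    congr 1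
    simp [Complex.conj_ofReal]
  have h1w : w * star w = 1 := by
    rw [hwstar, hwdef, ← Complex.exp_add, neg_add_cancel, Complex.exp_zero]
  have h2w : w + star w = 2 * Complex.cos ((φ:ℝ):ℂ) := by
    rw [hwstar, hwdef, Complex.two_cos, neg_mul]
    ring
  have hsw : star ((w - 1)/2 : ℂ) = (star w - 1)/2 := by
    rw [star_div₀, star_sub, star_one]
    norm_num
  -- the explicit unitary
  have harg : (-(Complex.I * (t:ℂ))) • H = ((-(Complex.I * t)) * ((Emax/2:ℝ):ℂ)) • (Hhat + 1) := by
    rw [hHdef, smul_smul]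
  have h2z : Complex.exp (2 * ((-(Complex.I * t)) * ((Emax/2:ℝ):ℂ))) = w := by
    rw [hwdef]
    congr 1
    push_cast [hφ]
    ring
  have hU : U = (1 + (w-1)/2) • 1 + ((w-1)/2) • Hhat := by
    rw [hUdef, harg, exp_smul_of_sq_eq_two_smul _ hN2, h2z, smul_add, add_smul, one_smul]
    abel
  have hUH : Uᴴ = (1 + (star w - 1)/2) • 1 + ((star w - 1)/2) • Hhat := by
    rw [hU, conjTranspose_add, conjTranspose_smul, conjTranspose_smul, conjTranspose_one,
      hHhatH, star_add, star_one, hsw]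
  -- Fin 2 matrix identities
  have m0000 : E00 * E00 = E00 := by rw [hE00, f2, if_pos rfl]
  have m0001 : E00 * E01 = E01 := by rw [hE00, hE01, f2, if_pos rfl]
  have m0010 : E00 * E10 = 0 := by rw [hE00, hE10, f2, if_neg (by decide)]
  have m0011 : E00 * E11 = 0 := by rw [hE00, hE11, f2, if_neg (by decide)]
  have m1100 : E11 * E00 = 0 := by rw [hE11, hE00, f2, if_neg (by decide)]
  have m1101 : E11 * E01 = 0 := by rw [hE11, hE01, f2, if_neg (by decide)]
  have m1110 : E11 * E10 = E10 := by rw [hE11, hE10, f2, if_pos rfl]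
  have m1111 : E11 * E11 = E11 := by rw [hE11, f2, if_pos rfl]
  have mS00 : S * E00 = E10 := by
    rw [hS, add_mul, hE01, hE10, hE00, f2, if_neg (by decide), f2, if_pos rfl, zero_add]
  have m00S : E00 * S = E01 := by
    rw [hS, mul_add, hE00, hE01, hE10, f2, if_pos rfl, f2, if_neg (by decide), add_zero]
  have m10S : E10 * S = E11 := by
    rw [hS, mul_add, hE10, hE01, f2, if_pos rfl, f2, if_neg (by decide), add_zero, hE11]
  have trE00 : E00.trace = 1 := by
    rw [Matrix.trace_fin_two]; simp [hE00, Matrix.single]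
  have trE01 : E01.trace = 0 := by
    rw [Matrix.trace_fin_two]; simp [hE01, Matrix.single]
  have trE10 : E10.trace = 0 := by
    rw [Matrix.trace_fin_two]; simp [hE10, Matrix.single]
  have trE11 : E11.trace = 1 := by
    rw [Matrix.trace_fin_two]; simp [hE11, Matrix.single]
  -- structural products
  have K1 : ∀ ρ : Matrix (Fin d) (Fin d) ℂ,
      Hhat * (ρ ⊗ₖ E00) = (Pminus * ρ) ⊗ₖ E00 + (Pplus * ρ) ⊗ₖ E10 := by
    intro ρ
    rw [hHhatdef, add_mul, ← Matrix.mul_kronecker_mul, ← Matrix.mul_kronecker_mul, one_mul, mS00]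
  have K2 : ∀ ρ : Matrix (Fin d) (Fin d) ℂ,
      (ρ ⊗ₖ E00) * Hhat = (ρ * Pminus) ⊗ₖ E00 + (ρ * Pplus) ⊗ₖ E01 := by
    intro ρ
    rw [hHhatdef, mul_add, ← Matrix.mul_kronecker_mul, ← Matrix.mul_kronecker_mul, mul_one, m00S]
  have K3 : ∀ ρ : Matrix (Fin d) (Fin d) ℂ,
      Hhat * (ρ ⊗ₖ E00) * Hhat = (Pminus * ρ * Pminus) ⊗ₖ E00 + (Pminus * ρ * Pplus) ⊗ₖ E01
        + ((Pplus * ρ * Pminus) ⊗ₖ E10 + (Pplus * ρ * Pplus) ⊗ₖ E11) := by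
    intro ρ
    rw [K1, hHhatdef, add_mul, mul_add, mul_add, ← Matrix.mul_kronecker_mul, ← Matrix.mul_kronecker_mul,
      ← Matrix.mul_kronecker_mul, ← Matrix.mul_kronecker_mul, mul_one, mul_one, m00S, m10S]
  -- trace of Pminus products
  have trPm : ∀ ρ : Matrix (Fin d) (Fin d) ℂ,
      (Pminus * ρ).trace = ρ.trace - (Pplus * ρ).trace := by
    intro ρ
    rw [hPmdef, sub_mul, one_mul, trace_sub]
  have trPm' : ∀ ρ : Matrix (Fin d) (Fin d) ℂ,
      (ρ * Pminus).trace = ρ.trace - (Pplus * ρ).trace := by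
    intro ρ
    rw [trace_mul_comm, trPm]
  -- the four basic traces for Q = E00
  have tA0 : ∀ ρ : Matrix (Fin d) (Fin d) ℂ,
      (((1 : Matrix (Fin d) (Fin d) ℂ) ⊗ₖ E00) * (ρ ⊗ₖ E00)).trace = ρ.trace := by
    intro ρ
    rw [← Matrix.mul_kronecker_mul, one_mul, m0000, trace_kronecker, trE00, mul_one]
  have tB0 : ∀ ρ : Matrix (Fin d) (Fin d) ℂ,
      (((1 : Matrix (Fin d) (Fin d) ℂ) ⊗ₖ E00) * ((ρ ⊗ₖ E00) * Hhat)).trace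
        = ρ.trace - (Pplus * ρ).trace := by
    intro ρ
    rw [K2]
    simp only [mul_add, trace_add, ← Matrix.mul_kronecker_mul, one_mul,
      m0000, m0001, m0010, m0011, m1100, m1101, m1110, m1111, Matrix.kronecker_zero,
      trace_zero, trace_kronecker, trE00, trE01, trE10, trE11, mul_one, mul_zero,
      add_zero, zero_add]
    rw [trPm']
  have tC0 : ∀ ρ : Matrix (Fin d) (Fin d) ℂ,
      (((1 : Matrix (Fin d) (Fin d) ℂ) ⊗ₖ E00) * (Hhat * (ρ ⊗ₖ E00))).trace
        = ρ.trace - (Pplus * ρ).trace := by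
    intro ρ
    rw [K1]
    simp only [mul_add, trace_add, ← Matrix.mul_kronecker_mul, one_mul,
      m0000, m0001, m0010, m0011, m1100, m1101, m1110, m1111, Matrix.kronecker_zero,
      trace_zero, trace_kronecker, trE00, trE01, trE10, trE11, mul_one, mul_zero,
      add_zero, zero_add]
    rw [trPm]
  have tD0 : ∀ ρ : Matrix (Fin d) (Fin d) ℂ,
      (((1 : Matrix (Fin d) (Fin d) ℂ) ⊗ₖ E00) * (Hhat * (ρ ⊗ₖ E00) * Hhat)).trace
        = ρ.trace - (Pplus * ρ).trace := by
    intro ρ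
    rw [K3]
    simp only [mul_add, trace_add, ← Matrix.mul_kronecker_mul, one_mul,
      m0000, m0001, m0010, m0011, m1100, m1101, m1110, m1111, Matrix.kronecker_zero,
      trace_zero, trace_kronecker, trE00, trE01, trE10, trE11, mul_one, mul_zero,
      add_zero, zero_add]
    rw [trace_mul_cycle, hPm2, trPm]
  have tA1 : ∀ ρ : Matrix (Fin d) (Fin d) ℂ,
      (((1 : Matrix (Fin d) (Fin d) ℂ) ⊗ₖ E11) * (ρ ⊗ₖ E00)).trace = 0 := by
    intro ρ
    simp only [mul_add, trace_add, ← Matrix.mul_kronecker_mul, one_mul,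
      m0000, m0001, m0010, m0011, m1100, m1101, m1110, m1111, Matrix.kronecker_zero,
      trace_zero, trace_kronecker, trE00, trE01, trE10, trE11, mul_one, mul_zero,
      add_zero, zero_add]
  have tB1 : ∀ ρ : Matrix (Fin d) (Fin d) ℂ,
      (((1 : Matrix (Fin d) (Fin d) ℂ) ⊗ₖ E11) * ((ρ ⊗ₖ E00) * Hhat)).trace = 0 := by
    intro ρ
    rw [K2]
    simp only [mul_add, trace_add, ← Matrix.mul_kronecker_mul, one_mul,
      m0000, m0001, m0010, m0011, m1100, m1101, m1110, m1111, Matrix.kronecker_zero,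
      trace_zero, trace_kronecker, trE00, trE01, trE10, trE11, mul_one, mul_zero,
      add_zero, zero_add]
  have tC1 : ∀ ρ : Matrix (Fin d) (Fin d) ℂ,
      (((1 : Matrix (Fin d) (Fin d) ℂ) ⊗ₖ E11) * (Hhat * (ρ ⊗ₖ E00))).trace = 0 := by
    intro ρ
    rw [K1]
    simp only [mul_add, trace_add, ← Matrix.mul_kronecker_mul, one_mul,
      m0000, m0001, m0010, m0011, m1100, m1101, m1110, m1111, Matrix.kronecker_zero,
      trace_zero, trace_kronecker, trE00, trE01, trE10, trE11, mul_one, mul_zero,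
      add_zero, zero_add]
  have tD1 : ∀ ρ : Matrix (Fin d) (Fin d) ℂ,
      (((1 : Matrix (Fin d) (Fin d) ℂ) ⊗ₖ E11) * (Hhat * (ρ ⊗ₖ E00) * Hhat)).trace
        = (Pplus * ρ).trace := by
    intro ρ
    rw [K3]
    simp only [mul_add, trace_add, ← Matrix.mul_kronecker_mul, one_mul,
      m0000, m0001, m0010, m0011, m1100, m1101, m1110, m1111, Matrix.kronecker_zero,
      trace_zero, trace_kronecker, trE00, trE01, trE10, trE11, mul_one, mul_zero,
      add_zero, zero_add]
    rw [trace_mul_cycle, hP2]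
  have Ttrace : ∀ (ρ : Matrix (Fin d) (Fin d) ℂ) (Q : Matrix (Fin 2) (Fin 2) ℂ),
      ((((1 : Matrix (Fin d) (Fin d) ℂ) ⊗ₖ Q) * (U * (ρ ⊗ₖ E00) * Uᴴ)).trace)
        = (1 + (w-1)/2) * (1 + (star w - 1)/2) *
            (((1 : Matrix (Fin d) (Fin d) ℂ) ⊗ₖ Q) * (ρ ⊗ₖ E00)).trace
          + (1 + (w-1)/2) * ((star w - 1)/2) *
            (((1 : Matrix (Fin d) (Fin d) ℂ) ⊗ₖ Q) * ((ρ ⊗ₖ E00) * Hhat)).trace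
          + ((w-1)/2) * (1 + (star w - 1)/2) *
            (((1 : Matrix (Fin d) (Fin d) ℂ) ⊗ₖ Q) * (Hhat * (ρ ⊗ₖ E00))).trace
          + ((w-1)/2) * ((star w - 1)/2) *
            (((1 : Matrix (Fin d) (Fin d) ℂ) ⊗ₖ Q) * (Hhat * (ρ ⊗ₖ E00) * Hhat)).trace := by
    intro ρ Q
    rw [hUH, hU]
    simp only [add_mul, mul_add, smul_mul_assoc, mul_smul_comm, one_mul, mul_one,
      smul_smul, trace_add, trace_smul, smul_eq_mul]
    ring
  -- eigenvalue sums
  set splus : ℝ := ∑ j, if 0 ≤ lam j then lam j else 0 with hsplusdef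
  have hPtrace : (Pplus * (ρ₁ - ρ₀)).trace = ((splus:ℝ):ℂ) := by
    rw [hA, Finset.mul_sum, trace_sum]
    have hterm : ∀ j, (Pplus * ((lam j:ℂ) • vecMulVec (u j) (star (u j)))).trace
        = (((if 0 ≤ lam j then lam j else 0 : ℝ)):ℂ) := by
      intro j
      rw [mul_smul_comm, trace_smul, hPmul, apply_ite trace, trace_zero, htrP, smul_eq_mul]
      split
      · rw [mul_one]
      · rw [mul_zero]
        norm_num
    simp_rw [hterm, hsplusdef]
    push_cast
    rfl
  have hr : (Pplus * ρ₁).trace = (Pplus * ρ₀).trace + ((splus:ℝ):ℂ) := by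
    have h := hPtrace
    rw [mul_sub, trace_sub] at h
    linear_combination h
  have hsum0 : ∑ j, lam j = 0 := by
    have h1 : (ρ₁ - ρ₀).trace = 0 := by rw [trace_sub, htr₁, htr₀, sub_self]
    rw [hA, trace_sum] at h1
    simp_rw [trace_smul, htrP, smul_eq_mul, mul_one] at h1
    exact_mod_cast h1
  have habs : ∑ j, |lam j| = 2 * splus := by
    have h : ∑ j, |lam j| = ∑ j, (2*(if 0 ≤ lam j then lam j else 0) - lam j) := by
      refine Finset.sum_congr rfl fun j _ => ?_
      rcases le_or_gt 0 (lam j) with h|h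
      · rw [abs_of_nonneg h, if_pos h]
        ring
      · rw [abs_of_neg h, if_neg (not_le.mpr h)]
        ring
    rw [h, Finset.sum_sub_distrib, ← Finset.mul_sum, hsum0, hsplusdef, sub_zero]
  -- final computation
  rw [Ttrace ρ₀ E00, Ttrace ρ₁ E11, tA0 ρ₀, tB0 ρ₀, tC0 ρ₀, tD0 ρ₀,
    tA1 ρ₁, tB1 ρ₁, tC1 ρ₁, tD1 ρ₁, htr₀, hr, habs]
  push_cast
  linear_combination ((4 - 2*(Pplus * ρ₀).trace + ((splus:ℝ):ℂ))/8) * h1w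
    + (-(((splus:ℝ):ℂ))/8) * h2w
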